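/- Let f(y) = 1 + bδ φ_Y((y-1/2)/δ) be the perturbed density on [0,1] with φ_Y the hat function, and let R(y) = y(1 - F(y)) be the corresponding revenue function. Suppose C* ∈ (0,2), |b| < 4 - 2C*, and δ > 0 is sufficiently small. Then R is twice differentiable almost everywhere on [0,1], and R''(y) = -2f(y) - y f'(y) ≤ -C* for almost every y ∈ [0,1]. -/

import Mathlib

open Set MeasureTheory Filter

noncomputable def phiY (t : ℝ) : ℝ :=
  if t ∈ Set.Icc (-1:ℝ) 0 then t + 1
  else if t ∈ Set.Icc (0:ℝ) 2 then -t + 1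
  else if t ∈ Set.Icc (2:ℝ) 3 then t - 3
  else 0

lemma phiY_eq (t : ℝ) :
    phiY t = max 0 (min (t+1) (1-t)) + min 0 (max (1-t) (t-3)) := by
  unfold phiY
  split_ifs with h1 h2 h3 <;> simp only [Set.mem_Icc, not_and, not_le] at *
  · obtain ⟨ha, hb⟩ := h1
    rw [min_eq_left (by linarith), max_eq_right (by linarith),
       max_eq_left (by linarith), min_eq_left (by linarith)]
    ring
  · obtain ⟨ha, hb⟩ := h2
    rcases le_total t 1 with h | h
    · rw [min_eq_right (by linarith), max_eq_right (by linarith),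
         max_eq_left (by linarith), min_eq_left (by linarith)]
      ring
    · rw [min_eq_right (by linarith), max_eq_left (by linarith),
         max_eq_left (by linarith), min_eq_right (by linarith)]
      ring
  · obtain ⟨ha, hb⟩ := h3
    rw [min_eq_right (by linarith), max_eq_left (by linarith),
       max_eq_right (by linarith), min_eq_right (by linarith)]
    ring
  · rcases le_total t (-1) with h | h
    · rw [min_eq_left (by linarith), max_eq_left (by linarith),
         max_eq_left (by linarith), min_eq_left (by linarith)]
      ring
    · have ha : 0 < t := h1 h
      have hb : 2 < t := h2 ha.le
      have hc : 3 < t := h3 hb.le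
      rw [min_eq_right (by linarith), max_eq_left (by linarith),
         max_eq_right (by linarith), min_eq_left (by linarith)]
      ring

lemma phiY_cont : Continuous phiY := by
  have : phiY = fun t => max 0 (min (t+1) (1-t)) + min 0 (max (1-t) (t-3)) :=
    funext phiY_eq
  rw [this]
  fun_prop

lemma phiY_abs (t : ℝ) : |phiY t| ≤ 1 := by
  unfold phiY
  split_ifs with h1 h2 h3 <;> simp only [Set.mem_Icc] at * <;> rw [abs_le] <;>
    constructor <;>
    first
      | linarith [h1.1, h1.2]
      | linarith [h2.1, h2.2]
      | linarith [h3.1, h3.2]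
      | norm_num

lemma phiY_affine (t0 : ℝ) (h1 : t0 ≠ -1) (h2 : t0 ≠ 0) (h3 : t0 ≠ 2) (h4 : t0 ≠ 3) :
    ∃ c m : ℝ, |m| ≤ 1 ∧ (m ≠ 0 → -1 ≤ t0 ∧ t0 ≤ 3) ∧
      ∀ᶠ t in nhds t0, phiY t = c + m * t := by
  rcases lt_or_gt_of_ne h1 with hA | hA
  · refine ⟨0, 0, by norm_num, by simp, ?_⟩
    filter_upwards [Iio_mem_nhds hA] with t ht
    simp only [Set.mem_Iio] at ht
    unfold phiY
    rw [if_neg (by intro hmem; rw [Set.mem_Icc] at hmem; obtain ⟨u1, u2⟩ := hmem; linarith),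
       if_neg (by intro hmem; rw [Set.mem_Icc] at hmem; obtain ⟨u1, u2⟩ := hmem; linarith),
       if_neg (by intro hmem; rw [Set.mem_Icc] at hmem; obtain ⟨u1, u2⟩ := hmem; linarith)]
    ring
  rcases lt_or_gt_of_ne h2 with hB | hB
  · refine ⟨1, 1, by norm_num, fun _ => ⟨hA.le, by linarith⟩, ?_⟩
    filter_upwards [Ioo_mem_nhds hA hB] with t ht
    obtain ⟨ha, hb⟩ := ht
    unfold phiY
    rw [if_pos ⟨ha.le, hb.le⟩]
    ring
  rcases lt_or_gt_of_ne h3 with hCc | hCc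
  · refine ⟨1, -1, by norm_num, fun _ => ⟨by linarith, by linarith⟩, ?_⟩
    filter_upwards [Ioo_mem_nhds hB hCc] with t ht
    obtain ⟨ha, hb⟩ := ht
    unfold phiY
    rw [if_neg (by intro hmem; rw [Set.mem_Icc] at hmem; obtain ⟨u1, u2⟩ := hmem; linarith),
       if_pos ⟨ha.le, hb.le⟩]
    ring
  rcases lt_or_gt_of_ne h4 with hD | hD
  · refine ⟨-3, 1, by norm_num, fun _ => ⟨by linarith, hD.le⟩, ?_⟩
    filter_upwards [Ioo_mem_nhds hCc hD] with t ht
    obtain ⟨ha, hb⟩ := ht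
    unfold phiY
    rw [if_neg (by intro hmem; rw [Set.mem_Icc] at hmem; obtain ⟨u1, u2⟩ := hmem; linarith),
       if_neg (by intro hmem; rw [Set.mem_Icc] at hmem; obtain ⟨u1, u2⟩ := hmem; linarith),
       if_pos ⟨ha.le, hb.le⟩]
    ring
  · refine ⟨0, 0, by norm_num, by simp, ?_⟩
    filter_upwards [Ioi_mem_nhds hD] with t ht
    simp only [Set.mem_Ioi] at ht
    unfold phiY
    rw [if_neg (by intro hmem; rw [Set.mem_Icc] at hmem; obtain ⟨u1, u2⟩ := hmem; linarith),
       if_neg (by intro hmem; rw [Set.mem_Icc] at hmem; obtain ⟨u1, u2⟩ := hmem; linarith),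
       if_neg (by intro hmem; rw [Set.mem_Icc] at hmem; obtain ⟨u1, u2⟩ := hmem; linarith)]
    ring

theorem stmt5 (Cs b : ℝ) (hC : Cs ∈ Ioo (0:ℝ) 2) (hb : |b| < 4 - 2 * Cs) :
    ∃ δ₀ > (0:ℝ), ∀ δ : ℝ, 0 < δ → δ < δ₀ →
      ∀ f F R : ℝ → ℝ,
        (∀ y, f y = 1 + b * δ * phiY ((y - 1/2) / δ)) →
        (∀ y, F y = ∫ t in (0:ℝ)..y, f t) →
        (∀ y, R y = y * (1 - F y)) →
        ∀ᵐ y ∂(volume.restrict (Icc (0:ℝ) 1)),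
          DifferentiableAt ℝ (deriv R) y ∧
          deriv (deriv R) y = -2 * f y - y * deriv f y ∧
          deriv (deriv R) y ≤ -Cs := by
  obtain ⟨hC0, hC2⟩ := hC
  have hbnn : 0 ≤ |b| := abs_nonneg b
  have hnum : 0 < 2 - Cs - |b| / 2 := by linarith
  refine ⟨(2 - Cs - |b|/2) / (5 * (|b| + 1)), by positivity, ?_⟩
  intro δ hδ hδ0 f F R hf hF hR
  have hδne : δ ≠ 0 := hδ.ne'
  -- key numeric bound
  have hkey : 5 * (δ * |b|) ≤ 2 - Cs - |b| / 2 := by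
    have h1 : δ * (|b| + 1) < (2 - Cs - |b|/2) / (5 * (|b| + 1)) * (|b| + 1) := by
      apply mul_lt_mul_of_pos_right hδ0
      positivity
    have h2 : (2 - Cs - |b|/2) / (5 * (|b| + 1)) * (|b| + 1) = (2 - Cs - |b|/2) / 5 := by
      field_simp
    nlinarith [hδ.le]
  -- continuity of f
  have hfc : Continuous f := by
    have : f = fun y => 1 + b * δ * phiY ((y - 1/2) / δ) := funext hf
    rw [this]
    exact continuous_const.add (continuous_const.mul (phiY_cont.comp (by fun_prop)))
  -- FTC
  have hF' : ∀ y, HasDerivAt F (f y) y := by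
    intro y
    have : F = fun u => ∫ t in (0:ℝ)..u, f t := funext hF
    rw [this]
    exact (hfc.integral_hasStrictDerivAt 0 y).hasDerivAt
  -- derivative of R
  have hR' : ∀ y, HasDerivAt R (1 - F y - y * f y) y := by
    intro y
    have : R = fun y => y * (1 - F y) := funext hR
    rw [this]
    have : HasDerivAt (fun x => x * (1 - F x)) (1 * (1 - F y) + y * (0 - f y)) y :=
      (hasDerivAt_id y).mul ((hasDerivAt_const y (1:ℝ)).sub (hF' y))
    convert this using 1
    ring
  have hRd : deriv R = fun y => 1 - F y - y * f y := funext fun y => (hR' y).deriv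
  -- a.e. setup
  have hne : ∀ c : ℝ, ∀ᵐ y ∂(volume.restrict (Icc (0:ℝ) 1)), y ≠ c := by
    intro c
    apply ae_restrict_of_ae
    rw [ae_iff]
    have : {y : ℝ | ¬ y ≠ c} = {c} := by ext x; simp
    rw [this]
    exact measure_singleton c
  filter_upwards [ae_restrict_mem measurableSet_Icc, hne (1/2 - δ), hne (1/2),
    hne (1/2 + 2*δ), hne (1/2 + 3*δ)] with y hy hn1 hn2 hn3 hn4
  obtain ⟨hy0, hy1⟩ := hy
  set t0 : ℝ := (y - 1/2) / δ with ht0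
  have hne1 : t0 ≠ -1 := by
    intro h; apply hn1; rw [ht0] at h; field_simp at h; linarith
  have hne2 : t0 ≠ 0 := by
    intro h; apply hn2; rw [ht0] at h; field_simp at h; linarith
  have hne3 : t0 ≠ 2 := by
    intro h; apply hn3; rw [ht0] at h; field_simp at h; linarith
  have hne4 : t0 ≠ 3 := by
    intro h; apply hn4; rw [ht0] at h; field_simp at h; linarith
  obtain ⟨c, m, hm, hsupp, hev⟩ := phiY_affine t0 hne1 hne2 hne3 hne4
  -- transfer eventual equality to f
  have htend : Filter.Tendsto (fun z : ℝ => (z - 1/2) / δ) (nhds y) (nhds t0) := by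
    apply Continuous.tendsto'
    · fun_prop
    · rfl
  have hevf : ∀ᶠ z in nhds y, f z = (1 + b * δ * c - b * m / 2) + (b * m) * z := by
    filter_upwards [htend.eventually hev] with z hz
    rw [hf z, hz]
    field_simp
    ring
  have hfD : HasDerivAt f (b * m) y := by
    have h1 : HasDerivAt (fun z : ℝ => (1 + b * δ * c - b * m / 2) + (b * m) * z) (b * m) y := by
      simpa using ((hasDerivAt_id y).const_mul (b*m)).const_add (1 + b * δ * c - b * m / 2)
    exact h1.congr_of_eventuallyEq hevf
  -- second derivative
  have hRD : HasDerivAt (deriv R) (-2 * f y - y * (b * m)) y := by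
    rw [hRd]
    have h1 : HasDerivAt (fun z => 1 - F z - z * f z)
        ((0 - f y) - (1 * f y + y * (b * m))) y :=
      (((hasDerivAt_const y (1:ℝ)).sub (hF' y)).sub ((hasDerivAt_id y).mul hfD))
    convert h1 using 1
    ring
  refine ⟨hRD.differentiableAt, ?_, ?_⟩
  · rw [hRD.deriv, hfD.deriv]
  · rw [hRD.deriv]
    -- numeric estimate
    have hfy : f y = 1 + b * δ * phiY t0 := hf y
    have hphi : -1 ≤ phiY t0 ∧ phiY t0 ≤ 1 := abs_le.mp (phiY_abs t0)
    have hbphi : -|b| ≤ b * phiY t0 := by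
      have h1 : |b * phiY t0| ≤ |b| * 1 := by
        rw [abs_mul]
        exact mul_le_mul_of_nonneg_left (phiY_abs t0) hbnn
      have := neg_abs_le (b * phiY t0)
      linarith
    rcases eq_or_ne m 0 with hm0 | hm0
    · rw [hfy, hm0]
      nlinarith [hδ.le]
    · obtain ⟨hsl, hsu⟩ := hsupp hm0
      have hyu : y ≤ 1/2 + 3 * δ := by
        have := (div_le_iff₀ hδ).mp hsu
        linarith
      have hbm : -|b| ≤ b * m := by
        have h1 : |b * m| ≤ |b| * 1 := by
          rw [abs_mul]
          exact mul_le_mul_of_nonneg_left hm hbnn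
        have := neg_abs_le (b * m)
        linarith
      have hybm : -((1/2 + 3*δ) * |b|) ≤ y * (b * m) := by
        nlinarith
      rw [hfy]
      nlinarith [hδ.le]
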